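/- arXiv:0804.0472 — 3 statements merged into one kernel-verified Lean document; each statement's English description precedes it below -/
import Mathlib

section
/- Let T₁ be a bounded partial integral operator on L²(Ω×Ω) with kernel k ∈ L²(Ω³), and let K_α (α ∈ Ω) be the integral operators on L²(Ω) with kernels k(·,·,α). If λ ∈ ℂ is an eigenvalue of T₁, then there exists a measurable set Ω₀ ⊆ Ω with μ(Ω₀) > 0 such that λ is an eigenvalue of K_α for every α ∈ Ω₀. -/
open MeasureTheory

/-- If `λ` is an eigenvalue of the partial integral operator `T₁`, then there
is a measurable `Ω₀ ⊆ Ω` with `μ(Ω₀) > 0` such that `λ` is an eigenvalue of the slice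
integral operator `K_α` for every `α ∈ Ω₀`. -/
theorem pio_eigenvalue_implies_slice_eigenvalue (ν : ℕ) (a b : ℝ) (hab : a ≤ b)
    (Ω : Set (Fin ν → ℝ)) (hΩ : Ω = Set.univ.pi fun _ => Set.Icc a b)
    (μ : Measure (Fin ν → ℝ)) (hμ : μ = volume.restrict Ω)
    (k : (Fin ν → ℝ) → (Fin ν → ℝ) → (Fin ν → ℝ) → ℂ)
    (hk_meas : Measurable fun p : (Fin ν → ℝ) × (Fin ν → ℝ) × (Fin ν → ℝ) =>
      k p.1 p.2.1 p.2.2)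
    (hkL2 : MemLp (fun p : (Fin ν → ℝ) × (Fin ν → ℝ) × (Fin ν → ℝ) =>
      k p.1 p.2.1 p.2.2) 2 (μ.prod (μ.prod μ)))
    (M : ℝ)
    (hM : ∀ᵐ t ∂μ, ∫ x, ∫ s, ‖k x s t‖ ^ 2 ∂μ ∂μ ≤ M)
    (l : ℂ)
    (heig : ∃ f : (Fin ν → ℝ) × (Fin ν → ℝ) → ℂ, MemLp f 2 (μ.prod μ) ∧
      ¬ f =ᵐ[μ.prod μ] 0 ∧
      (fun p => ∫ s, k p.1 s p.2 * f (s, p.2) ∂μ) =ᵐ[μ.prod μ] fun p => l * f p) :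
    ∃ Ω₀ ⊆ Ω, MeasurableSet Ω₀ ∧ 0 < μ Ω₀ ∧
      ∀ α ∈ Ω₀, ∃ φ : (Fin ν → ℝ) → ℂ, MemLp φ 2 μ ∧ ¬ φ =ᵐ[μ] 0 ∧
        (fun x => ∫ s, k x s α * φ s ∂μ) =ᵐ[μ] fun x => l * φ x := by
  have hΩmeas : MeasurableSet Ω := by
    rw [hΩ]; exact MeasurableSet.univ_pi fun _ => measurableSet_Icc
  have hsf : SigmaFinite μ := by rw [hμ]; infer_instance
  obtain ⟨f, hf2, hfne, hfeq⟩ := heig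
  set g := hf2.aestronglyMeasurable.mk f with hgdef
  have hg : StronglyMeasurable g := hf2.aestronglyMeasurable.stronglyMeasurable_mk
  have hfg : f =ᵐ[μ.prod μ] g := hf2.aestronglyMeasurable.ae_eq_mk
  -- the squared-norm slice integral
  set h : (Fin ν → ℝ) → ENNReal := fun α => ∫⁻ x, (‖g (x, α)‖₊ : ENNReal) ^ (2:ℝ) ∂μ with hhdef
  have hsqmeas : Measurable fun p : (Fin ν → ℝ) × (Fin ν → ℝ) => (‖g p‖₊ : ENNReal) ^ (2:ℝ) :=
    ENNReal.continuous_rpow_const.measurable.comp hg.measurable.enorm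
  have hhmeas : Measurable h := by
    apply Measurable.lintegral_prod_left (f := fun x y => (‖g (x, y)‖₊ : ENNReal) ^ (2:ℝ))
    exact hsqmeas
  -- total integral identity
  have htot : ∫⁻ α, h α ∂μ = ∫⁻ p, (‖g p‖₊ : ENNReal) ^ (2:ℝ) ∂(μ.prod μ) :=
    (lintegral_prod_symm _ hsqmeas.aemeasurable).symm
  -- g is in L², hence total integral is finite
  have hg2 : MemLp g 2 (μ.prod μ) := hf2.ae_eq hfg
  have htotfin : ∫⁻ α, h α ∂μ ≠ ⊤ := by
    rw [htot]
    have := (eLpNorm_lt_top_iff_lintegral_rpow_enorm_lt_top (f := g) (μ := μ.prod μ)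
      (p := 2) (by norm_num) (by norm_num)).mp hg2.2
    simpa [enorm_eq_nnnorm] using this.ne
  -- the set of α with nonzero slice
  set A : Set (Fin ν → ℝ) := {α | h α ≠ 0} with hAdef
  have hAmeas : MeasurableSet A := (hhmeas (measurableSet_singleton 0)).compl
  have hApos : 0 < μ A := by
    rcases eq_zero_or_pos (μ A) with h0 | h0
    · exfalso
      have hhz : ∀ᵐ α ∂μ, h α = 0 := by
        rw [ae_iff]; simpa [hAdef] using h0
      have : ∫⁻ α, h α ∂μ = 0 := lintegral_eq_zero_iff' hhmeas.aemeasurable |>.mpr hhz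
      rw [htot] at this
      have hgz : (fun p => (‖g p‖₊ : ENNReal) ^ (2:ℝ)) =ᵐ[μ.prod μ] 0 :=
        (lintegral_eq_zero_iff' hsqmeas.aemeasurable).mp this
      have : g =ᵐ[μ.prod μ] 0 := by
        filter_upwards [hgz] with p hp
        simp only [Pi.zero_apply] at hp ⊢
        have : (‖g p‖₊ : ENNReal) = 0 := by
          by_contra hne
          exact hne (by
            have := ENNReal.rpow_eq_zero_iff.mp hp
            rcases this with ⟨h1, _⟩ | ⟨h1, h2⟩
            · exact h1
            · exact absurd h2 (by norm_num))
        simpa using this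
      exact hfne (hfg.trans this)
    · exact h0
  -- the good property
  have hGood : ∀ᵐ α ∂μ, ((∀ᵐ x ∂μ, (∫ s, k x s α * f (s, α) ∂μ) = l * f (x, α)) ∧
      (∀ᵐ x ∂μ, f (x, α) = g (x, α)) ∧ h α < ⊤) := by
    have hswap1 : ∀ᵐ q ∂μ.prod μ,
        (∫ s, k q.2 s q.1 * f (s, q.1) ∂μ) = l * f (q.2, q.1) := by
      have := (Measure.measurePreserving_swap (μ := μ) (ν := μ)).quasiMeasurePreserving.ae hfeq
      filter_upwards [this] with q hq
      simpa [Prod.swap] using hq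
    have h1 := Measure.ae_ae_of_ae_prod hswap1
    have hswap2 : ∀ᵐ q ∂μ.prod μ, f (q.2, q.1) = g (q.2, q.1) := by
      have := (Measure.measurePreserving_swap (μ := μ) (ν := μ)).quasiMeasurePreserving.ae hfg
      filter_upwards [this] with q hq
      simpa [Prod.swap] using hq
    have h2 := Measure.ae_ae_of_ae_prod hswap2
    have h3 : ∀ᵐ α ∂μ, h α < ⊤ := ae_lt_top hhmeas htotfin
    filter_upwards [h1, h2, h3] with α ha1 ha2 ha3
    exact ⟨ha1, ha2, ha3⟩
  -- null set of bad α
  obtain ⟨N, hSN, hNmeas, hN0⟩ := exists_measurable_superset_of_null (ae_iff.mp hGood)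
  refine ⟨(A ∩ Ω) \ N, fun α hα => hα.1.2, ((hAmeas.inter hΩmeas).diff hNmeas), ?_, ?_⟩
  · -- positivity
    have hΩc : μ Ωᶜ = 0 := by
      rw [hμ, Measure.restrict_apply hΩmeas.compl]
      simp
    have hsub : A ⊆ ((A ∩ Ω) \ N) ∪ (Ωᶜ ∪ N) := by
      intro x hx
      by_cases hxN : x ∈ N
      · exact Or.inr (Or.inr hxN)
      · by_cases hxΩ : x ∈ Ω
        · exact Or.inl ⟨⟨hx, hxΩ⟩, hxN⟩
        · exact Or.inr (Or.inl hxΩ)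
    have hle : μ ((A ∩ Ω) \ N ∪ (Ωᶜ ∪ N)) ≤ μ ((A ∩ Ω) \ N) + μ (Ωᶜ ∪ N) :=
      measure_union_le _ _
    have := (measure_mono hsub).trans hle
    have h2 : μ (Ωᶜ ∪ N) ≤ μ Ωᶜ + μ N := measure_union_le _ _
    rw [hΩc, hN0] at h2
    simp only [add_zero] at h2
    rcases eq_zero_or_pos (μ ((A ∩ Ω) \ N)) with h0 | h0
    · exfalso
      rw [h0, zero_add] at this
      exact absurd (le_antisymm (this.trans h2) zero_le).symm hApos.ne
    · exact h0
  · -- eigenvalue property on each α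
    rintro α ⟨⟨hαA, _⟩, hαN⟩
    have hGα : (∀ᵐ x ∂μ, (∫ s, k x s α * f (s, α) ∂μ) = l * f (x, α)) ∧
        (∀ᵐ x ∂μ, f (x, α) = g (x, α)) ∧ h α < ⊤ := by
      by_contra hc
      exact hαN (hSN hc)
    obtain ⟨heq, hfgα, hfin⟩ := hGα
    refine ⟨fun x => g (x, α), ?_, ?_, ?_⟩
    · constructor
      · exact (hg.comp_measurable measurable_prodMk_right).aestronglyMeasurable
      · rw [eLpNorm_lt_top_iff_lintegral_rpow_enorm_lt_top (by norm_num) (by norm_num)]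
        have := hfin
        rw [hhdef] at this
        simpa [enorm_eq_nnnorm] using this
    · intro hz
      apply hαA
      rw [hhdef]
      simp only
      have hm : Measurable fun x : Fin ν → ℝ => (‖g (x, α)‖₊ : ENNReal) ^ (2:ℝ) :=
        ENNReal.continuous_rpow_const.measurable.comp
          ((hg.measurable.comp measurable_prodMk_right).enorm)
      rw [lintegral_eq_zero_iff' hm.aemeasurable]
      filter_upwards [hz] with x hx
      simp only [Pi.zero_apply] at hx
      simp [Function.comp, hx, ENNReal.zero_rpow_of_pos (by norm_num : (0:ℝ) < 2)]
    · filter_upwards [heq, hfgα] with x hx hfx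
      have hint : (∫ s, k x s α * g (s, α) ∂μ) = ∫ s, k x s α * f (s, α) ∂μ := by
        apply integral_congr_ae
        filter_upwards [hfgα] with s hs
        rw [hs]
      rw [hint, hx, hfx]
end

section
/- Consider the partial integral operator T₁ on L²([0,1]²) with kernel k(x,s,y) = e^{x−s}e^y. The operator T₁ has no nonzero eigenvalues: for every λ ∈ ℂ \ {0} and every f ∈ L²([0,1]²), T₁f = λf implies f = 0. -/
open MeasureTheory

/-- The partial integral operator on `L²([0,1]²)` with kernel
`k(x,s,y) = e^{x-s}e^y` has no nonzero eigenvalues: `T₁f = λf` with `λ ≠ 0` forces `f = 0`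
(as an element of `L²`). -/
theorem example_kernel_no_nonzero_eigenvalues
    (μ : Measure ℝ) (hμ : μ = volume.restrict (Set.Icc (0 : ℝ) 1))
    (k : ℝ → ℝ → ℝ → ℂ)
    (hk : ∀ x s y : ℝ, k x s y = Complex.exp ((x : ℂ) - (s : ℂ)) * Complex.exp (y : ℂ))
    (l : ℂ) (hl : l ≠ 0)
    (f : ℝ × ℝ → ℂ) (hf : MemLp f 2 (μ.prod μ))
    (heig : (fun p => ∫ s, k p.1 s p.2 * f (s, p.2) ∂μ) =ᵐ[μ.prod μ]
      fun p => l * f p) :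
    f =ᵐ[μ.prod μ] 0 := by
  subst hμ
  set μ := volume.restrict (Set.Icc (0 : ℝ) 1) with hμdef
  set g : ℝ → ℂ := fun y => ∫ s, Complex.exp (-(s : ℂ)) * f (s, y) ∂μ with hgdef
  have hμuniv : μ Set.univ = 1 := by
    rw [hμdef, Measure.restrict_apply_univ, Real.volume_Icc]
    norm_num
  -- Step 1: rewrite the kernel integral
  have h1 : ∀ p : ℝ × ℝ, (∫ s, k p.1 s p.2 * f (s, p.2) ∂μ)
      = Complex.exp (p.1 : ℂ) * Complex.exp (p.2 : ℂ) * g p.2 := by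
    intro p
    rw [hgdef, ← integral_const_mul]
    refine integral_congr_ae (Filter.Eventually.of_forall fun s => ?_)
    simp only [hk, Complex.exp_sub, Complex.exp_neg]
    ring
  have heig' : ∀ᵐ p ∂(μ.prod μ),
      f p = l⁻¹ * (Complex.exp (p.1 : ℂ) * Complex.exp (p.2 : ℂ) * g p.2) := by
    filter_upwards [heig] with p hp
    rw [h1 p] at hp
    rw [hp, inv_mul_cancel_left₀ hl]
  -- swap coordinates
  have hswap : ∀ᵐ q ∂(μ.prod μ),
      f (q.2, q.1) = l⁻¹ * (Complex.exp (q.2 : ℂ) * Complex.exp (q.1 : ℂ) * g q.1) :=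
    (Measure.measurePreserving_swap).quasiMeasurePreserving.ae heig'
  have hyx : ∀ᵐ y ∂μ, ∀ᵐ x ∂μ,
      f (x, y) = l⁻¹ * (Complex.exp (x : ℂ) * Complex.exp (y : ℂ) * g y) :=
    Measure.ae_ae_of_ae_prod hswap
  -- the eigenvalue can equal e^y for at most one y
  have hexpne : ∀ᵐ (y : ℝ) ∂μ, Complex.exp (y : ℂ) ≠ l := by
    rw [ae_iff]
    have hsub : Set.Subsingleton {y : ℝ | Complex.exp (y : ℂ) = l} := by
      intro a ha b hb
      have h : Complex.exp (a : ℂ) = Complex.exp (b : ℂ) := ha.trans hb.symm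
      rw [← Complex.ofReal_exp, ← Complex.ofReal_exp] at h
      exact Real.exp_injective (by exact_mod_cast h)
    simpa using hsub.measure_zero μ
  -- conclude g = 0 a.e.
  have hgy : ∀ᵐ y ∂μ, g y = 0 := by
    filter_upwards [hyx, hexpne] with y hy hne
    have hgcomp : g y = l⁻¹ * Complex.exp (y : ℂ) * g y := by
      have e1 : g y = ∫ _ : ℝ, l⁻¹ * Complex.exp (y : ℂ) * g y ∂μ := by
        refine integral_congr_ae ?_
        filter_upwards [hy] with s hs
        simp only [hs, Complex.exp_neg]
        field_simp [Complex.exp_ne_zero]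
      conv_lhs => rw [e1]
      rw [integral_const, measureReal_def, hμuniv, ENNReal.toReal_one, one_smul]
    by_contra hne0
    apply hne
    have h2 : l⁻¹ * Complex.exp (y : ℂ) * g y = 1 * g y := by
      rw [one_mul, ← hgcomp]
    have h3 := mul_right_cancel₀ hne0 h2
    rwa [inv_mul_eq_one₀ hl, eq_comm] at h3
  have hg2 : ∀ᵐ p ∂(μ.prod μ), g p.2 = 0 :=
    (Measure.quasiMeasurePreserving_snd).ae hgy
  filter_upwards [heig', hg2] with p hp hpg
  simp [hp, hpg]
end

section
/- For κ₀ ∈ [1,∞), the function f₀(x,y) = e^x y^{1/2}/(1 − κ₀y) satisfies the equation f(x,y) − κ₀∫₀¹ e^{x−s} y f(s,y) ds = e^x y^{1/2} pointwise for every y ∈ [0,1] with y ≠ 1/κ₀, but f₀ does not belong to L²([0,1]²), i.e., ∫₀¹∫₀¹ |f₀(x,y)|² dx dy = ∞. -/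
open MeasureTheory

/-- For `κ₀ ∈ [1,∞)`, the function `f₀(x,y) = eˣ·√y / (1 - κ₀y)` satisfies
`f(x,y) - κ₀∫₀¹ e^{x-s} y f(s,y) ds = eˣ y^{1/2}` pointwise for every `y ∈ [0,1]` with
`y ≠ 1/κ₀`, but `f₀ ∉ L²([0,1]²)`, i.e. `∫∫ |f₀|² = ∞`. -/
theorem example_equation_singular_no_L2_solution
    (μ : Measure ℝ) (hμ : μ = volume.restrict (Set.Icc (0 : ℝ) 1))
    (κ₀ : ℝ) (hκ₀ : 1 ≤ κ₀)
    (f₀ : ℝ × ℝ → ℂ)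
    (hf₀ : ∀ p : ℝ × ℝ,
      f₀ p = Complex.exp (p.1 : ℂ) * (Real.sqrt p.2 : ℂ) / (1 - (κ₀ : ℂ) * (p.2 : ℂ))) :
    (∀ y ∈ Set.Icc (0 : ℝ) 1, y ≠ 1 / κ₀ → ∀ x ∈ Set.Icc (0 : ℝ) 1,
      f₀ (x, y) - (κ₀ : ℂ) *
          ∫ s, Complex.exp ((x : ℂ) - (s : ℂ)) * (y : ℂ) * f₀ (s, y) ∂μ =
        Complex.exp (x : ℂ) * (Real.sqrt y : ℂ)) ∧
    ∫⁻ p, (‖f₀ p‖₊ : ENNReal) ^ 2 ∂(μ.prod μ) = ⊤ := by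
  subst hμ
  have hκ0 : (0 : ℝ) < κ₀ := lt_of_lt_of_le one_pos hκ₀
  have hμuniv : (volume.restrict (Set.Icc (0:ℝ) 1)) Set.univ = 1 := by
    rw [Measure.restrict_apply_univ, Real.volume_Icc]
    norm_num
  constructor
  · -- Part 1 : the equation
    intro y hy hne x hx
    have hden : (1 : ℂ) - (κ₀ : ℂ) * (y : ℂ) ≠ 0 := by
      have : (1 : ℝ) - κ₀ * y ≠ 0 := by
        intro h
        apply hne
        field_simp
        linarith
      intro h
      apply this
      have := congrArg Complex.re h
      push_cast at this
      simpa using this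
    have hconst : ∀ s : ℝ,
        Complex.exp ((x : ℂ) - (s : ℂ)) * (y : ℂ) * f₀ (s, y)
          = Complex.exp (x : ℂ) * (y : ℂ) * (Real.sqrt y : ℂ)
              / (1 - (κ₀ : ℂ) * (y : ℂ)) := by
      intro s
      rw [hf₀ (s, y)]
      simp only
      rw [Complex.exp_sub]
      field_simp
    have hint : (∫ s, Complex.exp ((x : ℂ) - (s : ℂ)) * (y : ℂ) * f₀ (s, y)
          ∂(volume.restrict (Set.Icc (0:ℝ) 1)))
        = Complex.exp (x : ℂ) * (y : ℂ) * (Real.sqrt y : ℂ)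
            / (1 - (κ₀ : ℂ) * (y : ℂ)) := by
      simp_rw [hconst]
      rw [integral_const, measureReal_def, hμuniv]
      simp
    rw [hint, hf₀ (x, y)]
    field_simp
  · -- Part 2 : non-integrability
    by_contra htop
    set a : ℝ := 1 / κ₀ with ha_def
    have ha : 0 < a := by positivity
    have ha1 : a ≤ 1 := by
      rw [ha_def]
      rw [div_le_one hκ0]
      exact hκ₀
    have hκa : κ₀ * a = 1 := by rw [ha_def, mul_one_div, div_self hκ0.ne']
    set g : ℝ → ℝ := fun y => y / (1 - κ₀ * y) ^ 2 with hg_def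
    have hgmeas : Measurable g := by fun_prop
    -- the non-integrability of g on [0,1]
    have hnotInt : ¬ IntervalIntegrable g volume 0 1 := by
      apply not_intervalIntegrable_of_sub_inv_isBigO_punctured (c := a)
      · rw [Asymptotics.isBigO_iff]
        refine ⟨κ₀ ^ 2, ?_⟩
        have h1 : ∀ᶠ y in nhdsWithin a {a}ᶜ, |y - a| < a / 2 :=
          eventually_nhdsWithin_of_eventually_nhds
            (eventually_abs_sub_lt a (by positivity))
        filter_upwards [h1, eventually_mem_nhdsWithin] with y hy1 hy2
        simp only [Set.mem_compl_iff, Set.mem_singleton_iff] at hy2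
        have hya : y - a ≠ 0 := sub_ne_zero.2 hy2
        have hd : 0 < |y - a| := abs_pos.2 hya
        have hyg : a / 2 < y := by
          cases abs_sub_lt_iff.1 hy1 with
          | intro h1 h2 => linarith
        have hy0 : 0 < y := lt_of_lt_of_le (by positivity) hyg.le
        have hrw : (1 : ℝ) - κ₀ * y = κ₀ * (a - y) := by
          rw [mul_sub, hκa]
        have hgy : g y = y / (κ₀ ^ 2 * (y - a) ^ 2) := by
          rw [hg_def]
          simp only
          rw [hrw]
          rw [mul_pow]
          congr 1
          ring
        rw [hgy]
        rw [Real.norm_eq_abs, Real.norm_eq_abs, abs_inv]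
        have hpos : 0 < κ₀ ^ 2 * (y - a) ^ 2 := by positivity
        rw [abs_div, abs_of_pos hy0, abs_of_pos hpos]
        have hdy : |y - a| ≤ y := le_of_lt (lt_of_lt_of_le hy1 (by linarith))
        have h2 : (y - a) ^ 2 = |y - a| ^ 2 := (sq_abs _).symm
        have key : κ₀ ^ 2 * (y / (κ₀ ^ 2 * (y - a) ^ 2)) = y / |y - a| ^ 2 := by
          rw [h2]
          field_simp
        rw [key, ← one_div, div_le_div_iff₀ hd (by positivity)]
        nlinarith [hdy, hd.le]
      · exact zero_ne_one
      · rw [Set.uIcc_of_le (zero_le_one)]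
        exact ⟨ha.le, ha1⟩
    -- from finiteness of the lintegral derive integrability of g
    apply hnotInt
    rw [intervalIntegrable_iff_integrableOn_Icc_of_le zero_le_one]
    have hlt : ∫⁻ p, (‖f₀ p‖₊ : ENNReal) ^ 2 ∂((volume.restrict (Set.Icc (0:ℝ) 1)).prod
        (volume.restrict (Set.Icc (0:ℝ) 1))) < ⊤ :=
      lt_of_le_of_ne le_top htop
    -- pointwise bound
    have hbound : ∀ᵐ p ∂((volume.restrict (Set.Icc (0:ℝ) 1)).prod
        (volume.restrict (Set.Icc (0:ℝ) 1))),
        ENNReal.ofReal (g p.2) ≤ (‖f₀ p‖₊ : ENNReal) ^ 2 := by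
      rw [Measure.prod_restrict]
      filter_upwards [ae_restrict_mem (measurableSet_Icc.prod measurableSet_Icc)]
        with p hp
      obtain ⟨⟨hx0, hx1⟩, ⟨hy0, hy1⟩⟩ := hp
      have hnorm : ‖f₀ p‖ ^ 2 = Real.exp p.1 ^ 2 * (p.2 / (1 - κ₀ * p.2) ^ 2) := by
        rw [hf₀ p]
        have : ((1 : ℂ) - (κ₀ : ℂ) * (p.2 : ℂ)) = (((1 - κ₀ * p.2 : ℝ)) : ℂ) := by
          push_cast; ring
        rw [this]
        rw [norm_div, norm_mul]
        rw [Complex.norm_exp, Complex.norm_real, Complex.norm_real, Real.norm_eq_abs,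
          Real.norm_eq_abs]
        simp only [Complex.ofReal_re]
        rw [div_pow, mul_pow, sq_abs, sq_abs, Real.sq_sqrt hy0, mul_div_assoc]
      have h1 : (‖f₀ p‖₊ : ENNReal) ^ 2 = ENNReal.ofReal (‖f₀ p‖ ^ 2) := by
        rw [ENNReal.ofReal_pow (norm_nonneg _)]
        rw [ofReal_norm_eq_enorm, enorm_eq_nnnorm]
      rw [h1, hnorm]
      apply ENNReal.ofReal_le_ofReal
      have hg0 : 0 ≤ p.2 / (1 - κ₀ * p.2) ^ 2 := by positivity
      have he1 : 1 ≤ Real.exp p.1 ^ 2 := by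
        have := Real.one_le_exp hx0
        nlinarith
      calc g p.2 = 1 * (p.2 / (1 - κ₀ * p.2) ^ 2) := by rw [one_mul]
        _ ≤ Real.exp p.1 ^ 2 * (p.2 / (1 - κ₀ * p.2) ^ 2) :=
            mul_le_mul_of_nonneg_right he1 hg0
    have hFmeas : Measurable (fun y => ENNReal.ofReal (g y)) := by fun_prop
    have hsnd : ∫⁻ p, ENNReal.ofReal (g p.2) ∂((volume.restrict (Set.Icc (0:ℝ) 1)).prod
          (volume.restrict (Set.Icc (0:ℝ) 1)))
        = ∫⁻ y, ENNReal.ofReal (g y) ∂(volume.restrict (Set.Icc (0:ℝ) 1)) := by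
      rw [← lintegral_map hFmeas measurable_snd, Measure.map_snd_prod, hμuniv,
        one_smul]
    have hglt : ∫⁻ y, ENNReal.ofReal (g y) ∂(volume.restrict (Set.Icc (0:ℝ) 1)) < ⊤ := by
      rw [← hsnd]
      exact lt_of_le_of_lt (lintegral_mono_ae hbound) hlt
    refine ⟨hgmeas.aestronglyMeasurable, ?_⟩
    have h0 : 0 ≤ᶠ[ae (volume.restrict (Set.Icc (0:ℝ) 1))] g := by
      filter_upwards [ae_restrict_mem measurableSet_Icc] with y hy
      exact div_nonneg hy.1 (sq_nonneg _)
    rw [hasFiniteIntegral_iff_ofReal h0]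
    exact hglt
end
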